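/- For every propositional formula φ = ⋀_{i=1}^n C_i in conjunctive normal form over a finite variable set X, the formula φ is satisfiable if and only if the mean-payoff game G^φ initialized at vertex C₁ admits an SPE σ̄ in which player P gets payoff 1, i.e. μ_P(⟨σ̄⟩_{C₁}) = 1. -/

import Mathlib

noncomputable section

open Filter

/-- Prepend a finite list to an infinite sequence. -/
def prependList {V : Type} (h : List V) (ρ : ℕ → V) : ℕ → V :=
  fun n => if hn : n < h.length then h.get ⟨n, hn⟩ else ρ (n - h.length)

/-- A (turn-based, multiplayer) game on a graph: a finite directed graph `(V, E)`
in which every vertex has an outgoing edge, a partition of the vertices among the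
players (given by `control`), and an outcome function `payoff : Π → V^ω → ℝ`. -/
structure GameStruct (P V : Type) where
  E : V → V → Prop
  total : ∀ v, ∃ w, E v w
  control : V → P
  payoff : P → (ℕ → V) → ℝ

namespace GameStruct

variable {P V : Type}

/-- A strategy: given the history before the current vertex and the current vertex,
choose a successor along an edge. -/
structure Strategy (G : GameStruct P V) where
  toFun : List V → V → V
  valid : ∀ h v, G.E v (toFun h v)

/-- A complete strategy profile. -/
abbrev Profile (G : GameStruct P V) := P → G.Strategy

def step (G : GameStruct P V) (σ : G.Profile) (p : List V × V) : List V × V :=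
  (p.1 ++ [p.2], (σ (G.control p.2)).toFun p.1 p.2)

/-- The play induced by the profile `σ` from vertex `v`, after the past history `h`. -/
def play (G : GameStruct P V) (σ : G.Profile) (h : List V) (v : V) : ℕ → V :=
  fun n => ((G.step σ)^[n] (h, v)).2

/-- An infinite path in the graph. -/
def IsPlay (G : GameStruct P V) (ρ : ℕ → V) : Prop := ∀ n, G.E (ρ n) (ρ (n + 1))

def IsPlayFrom (G : GameStruct P V) (v₀ : V) (ρ : ℕ → V) : Prop := ρ 0 = v₀ ∧ G.IsPlay ρ

/-- A history: a finite nonempty path. -/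
def IsHist (G : GameStruct P V) (H : List V) : Prop := H ≠ [] ∧ List.Chain' G.E H

/-- `hv` is a history of the initialized game `G_{∥v₀}` (here `h` is the part strictly
before the last vertex `v`; it may be empty, in which case `v = v₀`). -/
def IsHistFrom (G : GameStruct P V) (v₀ : V) (h : List V) (v : V) : Prop :=
  List.Chain' G.E (h ++ [v]) ∧ (h ++ [v]).head? = some v₀

/-- The (finite) history `H` is compatible with the strategy `σ` of player `j`. -/
def CompatList (G : GameStruct P V) (σ : G.Strategy) (j : P) (H : List V) : Prop :=
  ∀ k u w, H[k]? = some u → H[k + 1]? = some w → G.control u = j →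
    w = σ.toFun (H.take k) u

/-- The history `H` is compatible with `σ̄_{-i}`, i.e. with every strategy of the
profile except possibly that of player `i`. -/
def CompatExcept (G : GameStruct P V) (i : P) (σ : G.Profile) (H : List V) : Prop :=
  ∀ j, j ≠ i → G.CompatList (σ j) j H

/-- A play `ρ` is `l`-consistent for the requirement `l : V → ℝ ∪ {±∞}`. -/
def Consistent (G : GameStruct P V) (l : V → EReal) (ρ : ℕ → V) : Prop :=
  ∀ n, l (ρ n) ≤ (G.payoff (G.control (ρ n)) (fun k => ρ (n + k)) : EReal)

variable [DecidableEq P]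

/-- The set of `l`-rational strategy profiles (for the players other than `i`) from `v`.
A profile is identified with a complete profile whose `i`-component is irrelevant. -/
def LamRat (G : GameStruct P V) (l : V → EReal) (i : P) (v : V) : Set G.Profile :=
  { σ | ∃ σi : G.Strategy, ∀ h w, G.IsHistFrom v h w → G.CompatExcept i σ (h ++ [w]) →
      G.Consistent l (G.play (Function.update σ i σi) h w) }

/-- `sup_{σ_i} μ_i(⟨σ̄_{-i}, σ_i⟩_v)`. -/
def valAgainst (G : GameStruct P V) (i : P) (σ : G.Profile) (v : V) : EReal :=
  ⨆ σi : G.Strategy, (G.payoff i (G.play (Function.update σ i σi) [] v) : EReal)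

/-- The negotiation function, with the convention `inf ∅ = +∞`. -/
def nego (G : GameStruct P V) (l : V → EReal) : V → EReal :=
  fun v => ⨅ σ ∈ G.LamRat l (G.control v) v, G.valAgainst (G.control v) σ v

/-- A game with steady negotiation. -/
def SteadyNego (G : GameStruct P V) : Prop :=
  ∀ (i : P) (v : V) (l : V → EReal),
    G.LamRat l i v = ∅ ∨
      ∃ σ ∈ G.LamRat l i v, ∀ τ ∈ G.LamRat l i v, G.valAgainst i σ v ≤ G.valAgainst i τ v

/-- Nash equilibrium in `G_{∥v₀}`. -/
def IsNE (G : GameStruct P V) (v₀ : V) (σ : G.Profile) : Prop :=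
  ∀ (i : P) (σ' : G.Strategy),
    G.payoff i (G.play (Function.update σ i σ') [] v₀) ≤ G.payoff i (G.play σ [] v₀)

/-- `ε`-subgame-perfect equilibrium in `G_{∥v₀}`. -/
def IsEpsSPE (G : GameStruct P V) (v₀ : V) (ε : ℝ) (σ : G.Profile) : Prop :=
  ∀ h v, G.IsHistFrom v₀ h v → ∀ (i : P) (σ' : G.Strategy),
    G.payoff i (prependList h (G.play (Function.update σ i σ') h v)) ≤
      G.payoff i (prependList h (G.play σ h v)) + ε

/-- `l` is an `ε`-fixed point of the negotiation function (`±∞` is within `ε` of itself). -/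
def IsEFix (G : GameStruct P V) (ε : ℝ) (l : V → EReal) : Prop :=
  ∀ v, l v - (ε : EReal) ≤ G.nego l v ∧ G.nego l v ≤ l v + (ε : EReal)

/-- Prefix-independent game. -/
def PrefixIndependent (G : GameStruct P V) : Prop :=
  ∀ (h : List V) (ρ : ℕ → V), G.IsHist h → G.IsPlay ρ → ∀ i,
    G.payoff i (prependList h ρ) = G.payoff i ρ

/-- Well-initialized game: every vertex is reachable from `v₀`. -/
def WellInit (G : GameStruct P V) (v₀ : V) : Prop :=
  ∀ v, Relation.ReflTransGen G.E v₀ v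

/-- `G` is the mean-payoff game given by the weight function `π`. -/
def IsMeanPayoff (G : GameStruct P V) (π : P → V → V → ℚ) : Prop :=
  ∀ i ρ, G.payoff i ρ =
    Filter.liminf
      (fun n : ℕ => (∑ k ∈ Finset.range n, (π i (ρ k) (ρ (k + 1)) : ℝ)) / n)
      Filter.atTop

end GameStruct

/-! The SAT reduction game `G^φ`. A CNF formula over the variable set `X` is given by
its list of clauses, each clause being a list of literals `(x, b)` (`b = true` for the
positive literal `x`, `b = false` for `¬x`). -/

/-- Vertices of `G^φ`: one vertex per clause, one vertex per (clause, literal) pair,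
and a sink vertex `⊥`. -/
inductive SatV (n : ℕ) (X : Type) where
  | cl : Fin n → SatV n X
  | lit : Fin n → X → Bool → SatV n X
  | sink : SatV n X

/-- Edges of `G^φ`. -/
def satE {n : ℕ} {X : Type} [DecidableEq X] (hn : 0 < n)
    (clauses : Fin n → List (X × Bool)) : SatV n X → SatV n X → Prop := fun u v =>
  match u, v with
  | .cl i, .lit j x b => j = i ∧ (x, b) ∈ clauses i
  | .lit i _ _, .cl j => j = ⟨(i.val + 1) % n, Nat.mod_lt _ hn⟩
  | .lit _ _ b, .sink => b = false
  | .sink, .sink => True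
  | _, _ => False

/-- Control: Prover (`none`) controls the clause vertices and the sink; the
variable player `x` controls every literal vertex of `x`. -/
def satCtrl {n : ℕ} {X : Type} : SatV n X → Option X := fun v =>
  match v with
  | .cl _ => none
  | .lit _ x _ => some x
  | .sink => none

/-- Weights of `G^φ`: Prover gets `0` on the sink self-loop and `1` elsewhere; the
player `x` gets `0` on every edge leading to a positive literal vertex of `x` and `1`
elsewhere. -/
def satW {n : ℕ} {X : Type} [DecidableEq X] :
    Option X → SatV n X → SatV n X → ℚ := fun p u v =>
  match p with
  | none => match u, v with
    | .sink, .sink => 0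
    | _, _ => 1
  | some x => match v with
    | .lit _ y true => if y = x then 0 else 1
    | _ => 1


/-! ### Auxiliary lemmas -/

section AnalyticAux
open Finset

lemma avg_ub (w : ℕ → ℝ) (h1 : ∀ k, w k ≤ 1) :
    ∀ n : ℕ, (∑ k ∈ Finset.range n, w k) / n ≤ 1 := by
  intro n
  rcases Nat.eq_zero_or_pos n with h | h
  · simp [h]
  · rw [div_le_one (by exact_mod_cast h)]
    calc ∑ k ∈ range n, w k ≤ ∑ _k ∈ range n, (1:ℝ) := sum_le_sum fun k _ => h1 k
      _ = n := by simp

lemma avg_tendsto_one (w : ℕ → ℝ) (N : ℕ) (h0 : ∀ k, 0 ≤ w k) (h1 : ∀ k, w k ≤ 1)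
    (hN : ∀ k, N ≤ k → w k = 1) :
    Tendsto (fun n : ℕ => (∑ k ∈ Finset.range n, w k) / n) atTop (nhds 1) := by
  have hlb : ∀ n : ℕ, N + 1 ≤ n → 1 - (N:ℝ) / n ≤ (∑ k ∈ range n, w k) / n := by
    intro n hn
    have hn0 : (0:ℝ) < n := by exact_mod_cast Nat.lt_of_lt_of_le (Nat.succ_pos N) hn
    have hsum : ((n:ℝ) - N) ≤ ∑ k ∈ range n, w k := by
      have e1 : ∑ k ∈ Ico N n, w k = ((n - N : ℕ) : ℝ) := by
        rw [sum_congr rfl (fun k hk => hN k (mem_Ico.1 hk).1)]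
        simp [Nat.card_Ico]
      have e2 : ∑ k ∈ Ico N n, w k ≤ ∑ k ∈ range n, w k := by
        apply sum_le_sum_of_subset_of_nonneg
        · intro k hk; exact mem_range.2 (mem_Ico.1 hk).2
        · intro k _ _; exact h0 k
      have : ((n:ℝ) - N) = ((n - N : ℕ) : ℝ) := by
        have : N ≤ n := by omega
        push_cast [this]; ring
      rw [this]; linarith
    rw [show (1:ℝ) - (N:ℝ)/n = ((n:ℝ) - N)/n by field_simp]
    gcongr
  have htop : Tendsto (fun n : ℕ => 1 - (N:ℝ) / n) atTop (nhds 1) := by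
    have := tendsto_const_div_atTop_nhds_zero_nat (N : ℝ)
    simpa using tendsto_const_nhds.sub this
  apply tendsto_of_tendsto_of_tendsto_of_le_of_le' htop tendsto_const_nhds
  · filter_upwards [eventually_ge_atTop (N+1)] with n hn using hlb n hn
  · filter_upwards with n using avg_ub w h1 n

lemma avg_tendsto_zero (w : ℕ → ℝ) (N : ℕ) (h0 : ∀ k, 0 ≤ w k) (h1 : ∀ k, w k ≤ 1)
    (hN : ∀ k, N ≤ k → w k = 0) :
    Tendsto (fun n : ℕ => (∑ k ∈ Finset.range n, w k) / n) atTop (nhds 0) := by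
  have hub : ∀ n : ℕ, (∑ k ∈ range n, w k) / n ≤ (N:ℝ) / n := by
    intro n
    rcases Nat.eq_zero_or_pos n with h | h
    · simp [h]
    · have hn0 : (0:ℝ) < n := by exact_mod_cast h
      have hsum : ∑ k ∈ range n, w k ≤ N := by
        have e1 : ∑ k ∈ range n, w k = ∑ k ∈ range (min N n), w k := by
          rcases le_or_gt N n with h' | h'
          · rw [min_eq_left h']
            rw [← sum_range_add_sum_Ico w h']
            rw [sum_congr rfl (fun k hk => hN k (mem_Ico.1 hk).1)]
            simp
          · rw [min_eq_right (le_of_lt h')]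
        rw [e1]
        calc ∑ k ∈ range (min N n), w k ≤ ∑ _k ∈ range (min N n), (1:ℝ) :=
              sum_le_sum fun k _ => h1 k
          _ = min N n := by simp
          _ ≤ N := by exact_mod_cast Nat.min_le_left N n
      gcongr
  have hlb : ∀ n : ℕ, (0:ℝ) ≤ (∑ k ∈ range n, w k) / n := by
    intro n
    apply div_nonneg (sum_nonneg fun k _ => h0 k) (Nat.cast_nonneg n)
  apply tendsto_of_tendsto_of_tendsto_of_le_of_le' tendsto_const_nhds
    (tendsto_const_div_atTop_nhds_zero_nat (N:ℝ))
  · filter_upwards with n using hlb n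
  · filter_upwards with n using hub n

lemma liminf_avg_le_one (w : ℕ → ℝ) (h0 : ∀ k, 0 ≤ w k) (h1 : ∀ k, w k ≤ 1) :
    liminf (fun n : ℕ => (∑ k ∈ Finset.range n, w k) / n) atTop ≤ 1 := by
  have := liminf_le_liminf (f := atTop) (u := fun n : ℕ => (∑ k ∈ Finset.range n, w k) / n)
    (v := fun _ : ℕ => (1:ℝ)) (Eventually.of_forall fun n => avg_ub w h1 n)
    (isBoundedUnder_of ⟨0, fun n =>
      div_nonneg (Finset.sum_nonneg fun k _ => h0 k) (Nat.cast_nonneg n)⟩)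
    (IsBoundedUnder.isCoboundedUnder_ge (isBoundedUnder_of ⟨1, fun _ => le_refl (1:ℝ)⟩))
  simpa [liminf_const] using this

end AnalyticAux

namespace GameStruct
variable {P V : Type} (G : GameStruct P V)

lemma play_zero (σ : G.Profile) (h : List V) (v : V) : G.play σ h v 0 = v := rfl

lemma play_succ (σ : G.Profile) (h : List V) (v : V) (n : ℕ) :
    G.play σ h v (n + 1) =
      (σ (G.control (G.play σ h v n))).toFun ((G.step σ)^[n] (h, v)).1 (G.play σ h v n) := by
  unfold play
  rw [Function.iterate_succ_apply']
  rfl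

lemma isPlay_play (σ : G.Profile) (h : List V) (v : V) : G.IsPlay (G.play σ h v) := by
  intro n
  rw [play_succ]
  exact (σ _).valid _ _

lemma step_iterate_fst (σ : G.Profile) (h : List V) (v : V) :
    ∀ t, ((G.step σ)^[t] (h, v)).1 = h ++ List.ofFn (fun k : Fin t => G.play σ h v k) := by
  intro t
  induction t with
  | zero => simp
  | succ k ih =>
    rw [Function.iterate_succ_apply']
    show ((G.step σ)^[k] (h, v)).1 ++ [((G.step σ)^[k] (h, v)).2] = _
    rw [ih]
    rw [List.ofFn_succ']
    simp [play, List.concat_eq_append]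

lemma play_eq_iterate_on (σ : G.Profile) (f : V → V) (S : Set V)
    (hf : ∀ u ∈ S, f u ∈ S)
    (hmove : ∀ h u, u ∈ S → (σ (G.control u)).toFun h u = f u)
    {v : V} (hv : v ∈ S) (h : List V) :
    ∀ m, G.play σ h v m = f^[m] v ∧ f^[m] v ∈ S := by
  intro m
  induction m with
  | zero => exact ⟨rfl, hv⟩
  | succ k ih =>
    have h1 : G.play σ h v (k + 1) = f^[k + 1] v := by
      rw [play_succ, ih.1, Function.iterate_succ_apply', hmove _ _ ih.2]
    exact ⟨h1, Function.iterate_succ_apply' f k v ▸ hf _ ih.2⟩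

lemma play_shift (σ : G.Profile) (h : List V) (v : V) (t k : ℕ) :
    G.play σ ((G.step σ)^[t] (h, v)).1 (G.play σ h v t) k = G.play σ h v (t + k) := by
  unfold play
  rw [add_comm, Function.iterate_add_apply]


end GameStruct

section PrependAux
variable {V : Type}

lemma prependList_lt (h : List V) (ρ : ℕ → V) {m : ℕ} (hm : m < h.length) :
    prependList h ρ m = h.get ⟨m, hm⟩ := dif_pos hm

lemma prependList_ge (h : List V) (ρ : ℕ → V) {m : ℕ} (hm : h.length ≤ m) :
    prependList h ρ m = ρ (m - h.length) := dif_neg (by omega)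

end PrependAux

section SatAux

variable {n : ℕ} {X : Type} [DecidableEq X] {hn : 0 < n} {clauses : Fin n → List (X × Bool)}

lemma satE_sink_forced {w : SatV n X} (h : satE hn clauses .sink w) : w = .sink := by
  cases w <;> simp [satE] at h <;> rfl

lemma satE_cl {i : Fin n} {w : SatV n X} (h : satE hn clauses (.cl i) w) :
    ∃ x b, w = .lit i x b ∧ (x, b) ∈ clauses i := by
  cases w with
  | lit j x b =>
    obtain ⟨rfl, hm⟩ := h
    exact ⟨x, b, rfl, hm⟩
  | _ => simp [satE] at h

lemma satE_lit {i : Fin n} {x : X} {b : Bool} {w : SatV n X}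
    (h : satE hn clauses (.lit i x b) w) :
    w = .cl ⟨(i.1 + 1) % n, Nat.mod_lt _ hn⟩ ∨ (w = .sink ∧ b = false) := by
  cases w with
  | cl j => exact Or.inl (by rw [h])
  | lit => simp [satE] at h
  | sink => exact Or.inr ⟨rfl, h⟩

lemma satW_mem (p : Option X) (u v : SatV n X) : satW p u v = 0 ∨ satW p u v = 1 := by
  rcases p with _ | x
  · cases u <;> cases v <;> simp [satW]
  · cases v with
    | lit j y b =>
      cases b
      · right; simp [satW]
      · by_cases hxy : y = x <;> simp [satW, hxy]
    | cl j => right; simp [satW]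
    | sink => right; simp [satW]

lemma satW_nonneg (p : Option X) (u v : SatV n X) : (0:ℝ) ≤ (satW p u v : ℝ) := by
  rcases satW_mem p u v with h | h <;> rw [h] <;> norm_num

lemma satW_le_one (p : Option X) (u v : SatV n X) : (satW p u v : ℝ) ≤ 1 := by
  rcases satW_mem p u v with h | h <;> rw [h] <;> norm_num

lemma satW_none_one {u : SatV n X} (v : SatV n X) (h : u ≠ .sink) :
    satW none u v = 1 := by
  cases u <;> cases v <;> simp [satW] at h ⊢

lemma satW_some_one (x : X) (u : SatV n X) {v : SatV n X}
    (h : ∀ j, v ≠ SatV.lit j x true) : satW (some x) u v = 1 := by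
  cases v with
  | lit j y b =>
    cases b
    · simp [satW]
    · have : y ≠ x := fun hyx => h j (by rw [hyx])
      simp [satW, this]
  | cl j => simp [satW]
  | sink => simp [satW]

lemma satW_some_zero (x : X) (u : SatV n X) (j : Fin n) :
    satW (some x) u (.lit j x true) = 0 := by simp [satW]

lemma satW_sink_sink : satW (none : Option X) (.sink : SatV n X) .sink = 0 := rfl

end SatAux


section SatAux2

variable {n : ℕ} {X : Type} [DecidableEq X]

/-- The canonical positional "move" function for the equilibrium profile. -/
def satF (hn : 0 < n) (ν : X → Bool) (c : Fin n → X × Bool) : SatV n X → SatV n X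
  | .cl i => .lit i (c i).1 (c i).2
  | .lit i x b => if b = false ∧ ν x = true then .sink
      else .cl ⟨(i.1 + 1) % n, Nat.mod_lt _ hn⟩
  | .sink => .sink

/-- Vertices that are "good" for Prover. -/
def goodP (ν : X → Bool) : SatV n X → Prop
  | .sink => False
  | .lit _ x false => ν x = false
  | _ => True

variable {hn : 0 < n} {clauses : Fin n → List (X × Bool)} {ν : X → Bool} {c : Fin n → X × Bool}

lemma satF_valid (hc1 : ∀ i, c i ∈ clauses i) (v : SatV n X) :
    satE hn clauses v (satF hn ν c v) := by
  cases v with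
  | cl i => exact ⟨rfl, by simpa using hc1 i⟩
  | lit i x b =>
    by_cases hb : b = false ∧ ν x = true
    · simp only [satF, if_pos hb]
      exact hb.1
    · simp only [satF, if_neg hb]
      exact rfl
  | sink => exact trivial

lemma satF_sink : satF hn ν c (.sink : SatV n X) = .sink := rfl

lemma goodP_ne_sink {v : SatV n X} (h : goodP ν v) : v ≠ .sink := by
  rintro rfl; exact h

lemma goodP_closed (hc2 : ∀ i, ν (c i).1 = (c i).2) {v : SatV n X} (h : goodP ν v) :
    goodP ν (satF hn ν c v) := by
  cases v with
  | cl i =>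
    show goodP ν (.lit i (c i).1 (c i).2)
    rcases hb : (c i).2 with _ | _
    · show ν (c i).1 = false
      rw [hc2 i, hb]
    · trivial
  | lit i x b =>
    cases b with
    | false =>
      have hx : ν x = false := h
      rw [show satF hn ν c (.lit i x false) = .cl ⟨(i.1 + 1) % n, Nat.mod_lt _ hn⟩ from by
        simp [satF, hx]]
      trivial
    | true =>
      rw [show satF hn ν c (.lit i x true) = .cl ⟨(i.1 + 1) % n, Nat.mod_lt _ hn⟩ from by
        simp [satF]]
      trivial
  | sink => exact absurd h (by simp [goodP])

lemma satF_not_posx (hc2 : ∀ i, ν (c i).1 = (c i).2) {x : X} (hx : ν x = false)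
    (u : SatV n X) (j : Fin n) : satF hn ν c u ≠ .lit j x true := by
  cases u with
  | cl i =>
    intro hcon
    simp only [satF, SatV.lit.injEq] at hcon
    obtain ⟨_, h1, h2⟩ := hcon
    have h3 := hc2 i
    rw [h1, h2] at h3
    rw [hx] at h3
    simp at h3
  | lit i y b =>
    by_cases hb : b = false ∧ ν y = true <;> simp [satF, hb]
  | sink => simp [satF]

lemma satF_notin_Sx (hc2 : ∀ i, ν (c i).1 = (c i).2) {x : X} (hx : ν x = true)
    (u : SatV n X) (j : Fin n) : satF hn ν c u ≠ .lit j x false := by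
  cases u with
  | cl i =>
    intro hcon
    simp only [satF, SatV.lit.injEq] at hcon
    obtain ⟨_, h1, h2⟩ := hcon
    have h3 := hc2 i
    rw [h1, h2] at h3
    rw [hx] at h3
    simp at h3
  | lit i y b =>
    by_cases hb : b = false ∧ ν y = true <;> simp [satF, hb]
  | sink => simp [satF]

variable (G : GameStruct (Option X) (SatV n X))

lemma payoff_eq_one (hmp : G.IsMeanPayoff satW) (i : Option X) (ρ : ℕ → SatV n X) (N : ℕ)
    (hw : ∀ m, N ≤ m → satW i (ρ m) (ρ (m + 1)) = 1) : G.payoff i ρ = 1 := by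
  rw [hmp]
  exact (avg_tendsto_one _ N (fun k => satW_nonneg i (ρ k) (ρ (k+1)))
    (fun k => satW_le_one i (ρ k) (ρ (k+1)))
    (fun k hk => by rw [hw k hk]; norm_num)).liminf_eq

lemma payoff_eq_zero (hmp : G.IsMeanPayoff satW) (i : Option X) (ρ : ℕ → SatV n X) (N : ℕ)
    (hw : ∀ m, N ≤ m → satW i (ρ m) (ρ (m + 1)) = 0) : G.payoff i ρ = 0 := by
  rw [hmp]
  exact (avg_tendsto_zero _ N (fun k => satW_nonneg i (ρ k) (ρ (k+1)))
    (fun k => satW_le_one i (ρ k) (ρ (k+1)))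
    (fun k hk => by rw [hw k hk]; norm_num)).liminf_eq

lemma payoff_le_one (hmp : G.IsMeanPayoff satW) (i : Option X) (ρ : ℕ → SatV n X) :
    G.payoff i ρ ≤ 1 := by
  rw [hmp]
  exact liminf_avg_le_one _ (fun k => satW_nonneg i (ρ k) (ρ (k+1)))
    (fun k => satW_le_one i (ρ k) (ρ (k+1)))

lemma payoff_prepend_one (hmp : G.IsMeanPayoff satW) (i : Option X) (h : List (SatV n X))
    (ρ : ℕ → SatV n X) (N : ℕ) (hw : ∀ m, N ≤ m → satW i (ρ m) (ρ (m + 1)) = 1) :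
    G.payoff i (prependList h ρ) = 1 := by
  apply payoff_eq_one G hmp i _ (h.length + N)
  intro m hm
  rw [prependList_ge h ρ (by omega), prependList_ge h ρ (by omega),
    show m + 1 - h.length = (m - h.length) + 1 by omega]
  exact hw _ (by omega)

lemma payoff_prepend_zero (hmp : G.IsMeanPayoff satW) (i : Option X) (h : List (SatV n X))
    (ρ : ℕ → SatV n X) (N : ℕ) (hw : ∀ m, N ≤ m → satW i (ρ m) (ρ (m + 1)) = 0) :
    G.payoff i (prependList h ρ) = 0 := by
  apply payoff_eq_zero G hmp i _ (h.length + N)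
  intro m hm
  rw [prependList_ge h ρ (by omega), prependList_ge h ρ (by omega),
    show m + 1 - h.length = (m - h.length) + 1 by omega]
  exact hw _ (by omega)

end SatAux2

open GameStruct in
/-- A CNF formula `φ` is satisfiable iff the mean-payoff game `G^φ`,
initialized at the first clause vertex, admits an SPE in which Prover gets payoff 1. -/
theorem sat_iff_SPE_with_payoff_one
    {n : ℕ} (hn : 0 < n) {X : Type} [Fintype X] [DecidableEq X]
    (clauses : Fin n → List (X × Bool)) (hcl : ∀ i, clauses i ≠ [])
    (G : GameStruct (Option X) (SatV n X))
    (hE : G.E = satE hn clauses) (hc : G.control = satCtrl)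
    (hmp : G.IsMeanPayoff satW) :
    (∃ ν : X → Bool, ∀ i, ∃ lit ∈ clauses i, ν lit.1 = lit.2) ↔
      ∃ σ : G.Profile, G.IsEpsSPE (SatV.cl ⟨0, hn⟩) 0 σ ∧
        G.payoff none (G.play σ [] (SatV.cl ⟨0, hn⟩)) = 1 := by
  constructor
  · rintro ⟨ν, hsat⟩
    choose c hc1 hc2 using hsat
    have hσ₀valid : ∀ (h : List (SatV n X)) (v : SatV n X), G.E v (satF hn ν c v) := by
      intro h v; rw [hE]; exact satF_valid hc1 v
    set σ₀ : G.Strategy := ⟨fun _ v => satF hn ν c v, hσ₀valid⟩ with hσ₀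
    have hplayσ : ∀ (h : List (SatV n X)) (u : SatV n X) (m : ℕ),
        G.play (fun _ => σ₀) h u m = (satF hn ν c)^[m] u := fun h u m =>
      (G.play_eq_iterate_on _ (satF hn ν c) Set.univ (fun _ _ => Set.mem_univ _)
        (fun _ _ _ => rfl) (Set.mem_univ u) h m).1
    have hsinkplay : ∀ (τ : G.Profile) (h : List (SatV n X)) (m : ℕ),
        G.play τ h .sink m = .sink := by
      intro τ h m
      have := (G.play_eq_iterate_on τ (satF hn ν c) {u | u = .sink} ?_ ?_ rfl h m).1
      · rw [this]
        exact Function.iterate_fixed rfl m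
      · intro u hu
        rw [Set.mem_setOf_eq] at hu
        subst hu
        rfl
      · intro h' u hu
        rw [Set.mem_setOf_eq] at hu
        subst hu
        have hv := (τ (G.control .sink)).valid h' .sink
        rw [hE] at hv
        exact satE_sink_forced hv
    have hgood_iter : ∀ (v : SatV n X), goodP ν v → ∀ m, goodP ν ((satF hn ν c)^[m] v) := by
      intro v hv m
      induction m with
      | zero => exact hv
      | succ k ih => rw [Function.iterate_succ_apply']; exact goodP_closed hc2 ih
    have hpay_good : ∀ (h : List (SatV n X)) (v : SatV n X), goodP ν v →
        G.payoff none (prependList h (G.play (fun _ => σ₀) h v)) = 1 := by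
      intro h v hv
      rw [show G.play (fun _ => σ₀) h v = fun m => (satF hn ν c)^[m] v from
        funext (hplayσ h v)]
      apply payoff_prepend_one G hmp none h _ 0
      intro m _
      exact satW_none_one _ (goodP_ne_sink (hgood_iter v hv m))
    have hpayx_one : ∀ (x : X), ν x = false → ∀ (h : List (SatV n X)) (v : SatV n X),
        G.payoff (some x) (prependList h (G.play (fun _ => σ₀) h v)) = 1 := by
      intro x hx h v
      rw [show G.play (fun _ => σ₀) h v = fun m => (satF hn ν c)^[m] v from
        funext (hplayσ h v)]
      apply payoff_prepend_one G hmp (some x) h _ 0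
      intro m _
      rw [Function.iterate_succ_apply']
      exact satW_some_one x _ (satF_not_posx hc2 hx _)
    refine ⟨fun _ => σ₀, ?_, ?_⟩
    · intro h v _hist i σ'
      rw [add_zero]
      rcases i with _ | x
      · -- Prover deviates
        rcases hv : v with i' | ⟨j, y, b⟩ | _
        · -- clause vertex: good
          rw [hpay_good h (SatV.cl i') (by simp [goodP])]
          exact payoff_le_one G hmp none _
        · -- literal vertex
          by_cases hgb : b = false ∧ ν y = true
          · -- play goes to sink under both profiles
            obtain ⟨rfl, hy⟩ := hgb
            have hfv : satF hn ν c (.lit j y false) = .sink := by simp [satF, hy]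
            have heq : ∀ (τ : G.Profile), τ (some y) = σ₀ →
                ∀ m, G.play τ h (.lit j y false) m =
                  (fun m => if m = 0 then (SatV.lit j y false : SatV n X) else .sink) m := by
              intro τ hτ m
              rcases Nat.eq_zero_or_pos m with rfl | hm
              · rfl
              · obtain ⟨k, rfl⟩ : ∃ k, m = 1 + k := ⟨m - 1, by omega⟩
                rw [← G.play_shift τ h _ 1 k]
                have h1 : G.play τ h (.lit j y false) 1 = .sink := by
                  rw [G.play_succ τ h _ 0]
                  show (τ (G.control (SatV.lit j y false))).toFun _ _ = _
                  rw [hc]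
                  show (τ (some y)).toFun _ _ = _
                  rw [hτ]
                  exact hfv
                rw [h1, hsinkplay]
                simp
            have e1 : G.play (fun _ => σ₀) h (.lit j y false) =
                fun m => if m = 0 then (SatV.lit j y false : SatV n X) else .sink :=
              funext (heq _ rfl)
            have e2 : G.play (Function.update (fun _ => σ₀) none σ') h (.lit j y false) =
                fun m => if m = 0 then (SatV.lit j y false : SatV n X) else .sink :=
              funext (heq _ (Function.update_of_ne (by simp) _ _))
            rw [e1, e2]
          · -- good literal vertex
            have hgood : goodP ν (SatV.lit j y b) := by
              rcases b with _ | _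
              · show ν y = false
                cases hyy : ν y
                · rfl
                · exact absurd ⟨rfl, hyy⟩ hgb
              · simp [goodP]
            rw [hpay_good h (SatV.lit j y b) hgood]
            exact payoff_le_one G hmp none _
        · -- sink vertex: both plays constant sink
          have e1 : G.play (fun _ => σ₀) h .sink = fun _ => (SatV.sink : SatV n X) :=
            funext (hsinkplay _ h)
          have e2 : G.play (Function.update (fun _ => σ₀) none σ') h .sink =
              fun _ => (SatV.sink : SatV n X) := funext (hsinkplay _ h)
          rw [e1, e2]
      · -- variable player x deviates
        rcases hx : ν x with _ | _
        · -- ν x = false : profile payoff is 1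
          rw [hpayx_one x hx h v]
          exact payoff_le_one G hmp (some x) _
        · -- ν x = true
          by_cases hvx : ∃ j, v = SatV.lit j x false
          · -- profile play reaches sink, x gets 1
            obtain ⟨j, rfl⟩ := hvx
            have hfv : satF hn ν c (.lit j x false) = .sink := by simp [satF, hx]
            have hone : G.payoff (some x)
                (prependList h (G.play (fun _ => σ₀) h (.lit j x false))) = 1 := by
              rw [show G.play (fun _ => σ₀) h (.lit j x false) =
                  fun m => (satF hn ν c)^[m] (.lit j x false) from funext (hplayσ h _)]
              apply payoff_prepend_one G hmp (some x) h _ 0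
              intro m _
              have hsink : (satF hn ν c)^[m+1] (SatV.lit j x false : SatV n X) = .sink := by
                rw [Function.iterate_succ_apply, hfv]
                exact Function.iterate_fixed rfl m
              rw [hsink]
              exact satW_some_one x _ (fun _ => by simp)
            rw [hone]
            exact payoff_le_one G hmp (some x) _
          · -- v avoids negative x-literals: the deviation changes nothing
            push_neg at hvx
            have hvS : v ∈ {u : SatV n X | ∀ j, u ≠ SatV.lit j x false} := by
              intro j
              exact hvx j
            have hSx : ∀ m, G.play (Function.update (fun _ => σ₀) (some x) σ') h v m =
                (satF hn ν c)^[m] v := by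
              intro m
              refine (G.play_eq_iterate_on _ (satF hn ν c)
                {u : SatV n X | ∀ j, u ≠ SatV.lit j x false} ?_ ?_ hvS h m).1
              · intro u _ j
                exact satF_notin_Sx hc2 hx u j
              · intro h' u hu
                rcases u with i' | ⟨j', y', b'⟩ | _
                · rw [hc]
                  show (Function.update (fun _ => σ₀) (some x) σ' none).toFun h' _ = _
                  rw [Function.update_of_ne (by simp)]
                · by_cases hyx : y' = x
                  · subst hyx
                    rcases b' with _ | _
                    · exact absurd rfl (hu j')
                    · rw [hc]
                      show (Function.update (fun _ => σ₀) (some y') σ' (some y')).toFun h' _ = _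
                      rw [Function.update_self]
                      have hv' := σ'.valid h' (SatV.lit j' y' true)
                      rw [hE] at hv'
                      rcases satE_lit hv' with h1 | ⟨_, hb⟩
                      · rw [h1]
                        simp [satF]
                      · simp at hb
                  · rw [hc]
                    show (Function.update (fun _ => σ₀) (some x) σ' (some y')).toFun h' _ = _
                    rw [Function.update_of_ne (by simp [hyx])]
                · rw [hc]
                  show (Function.update (fun _ => σ₀) (some x) σ' none).toFun h' _ = _
                  rw [Function.update_of_ne (by simp)]
            rw [show G.play (Function.update (fun _ => σ₀) (some x) σ') h v =
                G.play (fun _ => σ₀) h v from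
              funext fun m => (hSx m).trans (hplayσ h v m).symm]
    · rw [show G.play (fun _ => σ₀) [] (SatV.cl ⟨0, hn⟩) =
          fun m => (satF hn ν c)^[m] (SatV.cl ⟨0, hn⟩) from funext (hplayσ [] _)]
      apply payoff_eq_one G hmp none _ 0
      intro m _
      exact satW_none_one _ (goodP_ne_sink (hgood_iter (SatV.cl ⟨0, hn⟩) (by simp [goodP]) m))
  · rintro ⟨σ, hSPE, hpay⟩
    classical
    set ρ := G.play σ [] (SatV.cl ⟨0, hn⟩) with hρdef
    have hρ0 : ρ 0 = SatV.cl ⟨0, hn⟩ := rfl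
    have hEρ : ∀ m, satE hn clauses (ρ m) (ρ (m + 1)) := fun m => hE ▸ G.isPlay_play σ [] _ m
    have hsinkstay : ∀ (τ : G.Profile) (h : List (SatV n X)) (m : ℕ),
        G.play τ h .sink m = .sink := by
      intro τ h m
      have := (G.play_eq_iterate_on τ (fun _ => SatV.sink) {u | u = .sink} ?_ ?_ rfl h m).1
      · rw [this]
        exact Function.iterate_fixed rfl m
      · intro u hu
        rfl
      · intro h' u hu
        rw [Set.mem_setOf_eq] at hu
        subst hu
        have hv := (τ (G.control .sink)).valid h' .sink
        rw [hE] at hv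
        exact satE_sink_forced hv
    have hnosink : ∀ t, ρ t ≠ .sink := by
      intro t ht
      have hsink : ∀ s, t ≤ s → ρ s = .sink := by
        intro s hs
        induction s, hs using Nat.le_induction with
        | base => exact ht
        | succ s hs ih =>
          have := hEρ s
          rw [ih] at this
          exact satE_sink_forced this
      have h0 : G.payoff none ρ = 0 := by
        apply payoff_eq_zero G hmp none ρ t
        intro m hm
        rw [hsink m hm, hsink (m + 1) (by omega)]
        rfl
      rw [h0] at hpay
      norm_num at hpay
    have hmod : ∀ k : ℕ, (k % n + 1) % n = (k + 1) % n := by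
      intro k
      conv_rhs => rw [Nat.add_mod]
      conv_lhs => rw [Nat.add_mod]
      rw [Nat.mod_mod_of_dvd _ dvd_rfl]
    have hcl2 : ∀ m : ℕ, ρ (2 * m) = SatV.cl ⟨m % n, Nat.mod_lt _ hn⟩ := by
      intro m
      induction m with
      | zero =>
        rw [show (⟨0 % n, Nat.mod_lt _ hn⟩ : Fin n) = ⟨0, hn⟩ from Fin.ext (by simp)]
        exact hρ0
      | succ k ih =>
        have he1 := hEρ (2 * k)
        rw [ih] at he1
        obtain ⟨x, b, hxb, _⟩ := satE_cl he1
        have he2 := hEρ (2 * k + 1)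
        rw [hxb] at he2
        rcases satE_lit he2 with h1 | ⟨h1, _⟩
        · rw [show 2 * (k + 1) = 2 * k + 1 + 1 from by ring, h1]
          congr 1
          exact Fin.ext (by simpa using hmod k)
        · exact absurd h1 (hnosink _)
    have hlit : ∀ m : ℕ, ∃ x b, ρ (2 * m + 1) = SatV.lit ⟨m % n, Nat.mod_lt _ hn⟩ x b ∧
        (x, b) ∈ clauses ⟨m % n, Nat.mod_lt _ hn⟩ := by
      intro m
      have := hEρ (2 * m)
      rw [hcl2 m] at this
      exact satE_cl this
    have hHt : ∀ t : ℕ, ((G.step σ)^[t] (([] : List (SatV n X)), SatV.cl ⟨0, hn⟩)).1 =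
        List.ofFn (fun k : Fin t => ρ k) := by
      intro t
      rw [G.step_iterate_fst]
      simp [hρdef]
    have hIsHist : ∀ t : ℕ, G.IsHistFrom (SatV.cl ⟨0, hn⟩) (List.ofFn (fun k : Fin t => ρ k))
        (ρ t) := by
      intro t
      have hofn : (List.ofFn fun k : Fin t => ρ k) ++ [ρ t] =
          List.ofFn (fun k : Fin (t + 1) => ρ k) := by
        rw [List.ofFn_succ']
        simp [List.concat_eq_append]
      constructor
      · rw [hofn]
        show List.IsChain _ _
        rw [List.isChain_iff_getElem]
        intro k hk
        simp only [List.length_ofFn] at hk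
        rw [List.getElem_ofFn, List.getElem_ofFn]
        exact hE ▸ (hEρ k)
      · rw [hofn, List.ofFn_succ]
        simp [hρ0]
    -- the deviation strategy: always go to the sink when possible
    have hτval : ∀ (h : List (SatV n X)) (v : SatV n X), G.E v
        ((fun v => match v with
          | SatV.cl i => SatV.lit i ((clauses i).head (hcl i)).1 ((clauses i).head (hcl i)).2
          | SatV.lit i _ b => if b then SatV.cl ⟨(i.1 + 1) % n, Nat.mod_lt _ hn⟩ else SatV.sink
          | SatV.sink => SatV.sink) v) := by
      intro h v
      rw [hE]
      cases v with
      | cl i => exact ⟨rfl, by simpa using List.head_mem (hcl i)⟩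
      | lit i y b => cases b <;> simp <;> rfl
      | sink => exact trivial
    set τ : G.Strategy := ⟨fun _ v => match v with
      | SatV.cl i => SatV.lit i ((clauses i).head (hcl i)).1 ((clauses i).head (hcl i)).2
      | SatV.lit i _ b => if b then SatV.cl ⟨(i.1 + 1) % n, Nat.mod_lt _ hn⟩ else SatV.sink
      | SatV.sink => SatV.sink, hτval⟩ with hτdef
    have hkey : ∀ (t : ℕ) (j : Fin n) (x : X), ρ t = SatV.lit j x false →
        1 ≤ G.payoff (some x) ρ := by
      intro t j x ht
      have h1 := hSPE (List.ofFn fun k : Fin t => ρ k) (ρ t) (hIsHist t) (some x) τ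
      have hRplay : G.play σ (List.ofFn fun k : Fin t => ρ k) (ρ t) = fun k => ρ (t + k) := by
        funext k
        rw [← hHt t]
        exact G.play_shift σ [] _ t k
      have hprep : prependList (List.ofFn fun k : Fin t => ρ k) (fun k => ρ (t + k)) = ρ := by
        funext m
        by_cases hm : m < t
        · rw [prependList_lt _ _ (by simpa using hm)]
          simp [List.get_ofFn]
        · rw [prependList_ge _ _ (by simpa using not_lt.mp hm)]
          simp only [List.length_ofFn]
          congr 1
          omega
      have hLsink : ∀ k, 1 ≤ k →
          G.play (Function.update σ (some x) τ) (List.ofFn fun k : Fin t => ρ k) (ρ t) k =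
            .sink := by
        intro k hk
        obtain ⟨k', rfl⟩ : ∃ k', k = 1 + k' := ⟨k - 1, by omega⟩
        rw [← G.play_shift _ _ _ 1 k']
        have hone : G.play (Function.update σ (some x) τ)
            (List.ofFn fun k : Fin t => ρ k) (ρ t) 1 = .sink := by
          rw [G.play_succ _ _ _ 0]
          show ((Function.update σ (some x) τ) (G.control (ρ t))).toFun _ (ρ t) = _
          rw [ht, hc]
          show ((Function.update σ (some x) τ) (some x)).toFun _ _ = _
          rw [Function.update_self]
          rfl
        rw [hone, hsinkstay]
      have hLpay : G.payoff (some x) (prependList (List.ofFn fun k : Fin t => ρ k)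
          (G.play (Function.update σ (some x) τ) (List.ofFn fun k : Fin t => ρ k) (ρ t))) =
            1 := by
        apply payoff_prepend_one G hmp (some x) _ _ 1
        intro m hm
        rw [hLsink m hm, hLsink (m + 1) (by omega)]
        exact satW_some_one x _ (fun _ => by simp)
      rw [hLpay, hRplay, hprep, add_zero] at h1
      exact h1
    refine ⟨fun x => decide (G.payoff (some x) ρ < 1), ?_⟩
    intro i
    by_contra hcon
    push_neg at hcon
    have hbig : ∀ m, m % n = i.1 → ∃ x, ρ (2 * m + 1) = SatV.lit i x true ∧
        1 ≤ G.payoff (some x) ρ := by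
      intro m hm
      obtain ⟨x, b, hxb, hmem⟩ := hlit m
      have hfin : (⟨m % n, Nat.mod_lt _ hn⟩ : Fin n) = i := Fin.ext hm
      rw [hfin] at hxb hmem
      rcases b with _ | _
      · have hge := hkey (2 * m + 1) i x hxb
        have hν : decide (G.payoff (some x) ρ < 1) = false := decide_eq_false (not_lt.2 hge)
        exact absurd hν (hcon (x, false) hmem)
      · refine ⟨x, hxb, ?_⟩
        have hν := hcon (x, true) hmem
        simp only [ne_eq, decide_eq_true_eq] at hν
        exact not_lt.1 hν
    -- the zero-density estimate
    have hzero : ∀ x : X, 1 ≤ G.payoff (some x) ρ → ∀ ε : ℝ, 0 < ε →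
        ∀ᶠ N : ℕ in atTop,
          ∑ k ∈ Finset.range N, (1 - (satW (some x) (ρ k) (ρ (k + 1)) : ℝ)) < ε * N := by
      intro x hx ε hε
      rw [hmp (some x) ρ] at hx
      have hlim : (1 : ℝ) - ε <
          liminf (fun N : ℕ =>
            (∑ k ∈ Finset.range N, (satW (some x) (ρ k) (ρ (k + 1)) : ℝ)) / N) atTop := by
        linarith
      have hev := eventually_lt_of_lt_liminf hlim (isBoundedUnder_of ⟨0, fun N =>
        div_nonneg (Finset.sum_nonneg fun k _ => satW_nonneg _ _ _) (Nat.cast_nonneg N)⟩)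
      filter_upwards [hev, eventually_gt_atTop 0] with N hN hN0
      have hN0' : (0 : ℝ) < N := by exact_mod_cast hN0
      rw [lt_div_iff₀ hN0'] at hN
      have hsub : ∑ k ∈ Finset.range N, (1 - (satW (some x) (ρ k) (ρ (k + 1)) : ℝ)) =
          N - ∑ k ∈ Finset.range N, (satW (some x) (ρ k) (ρ (k + 1)) : ℝ) := by
        rw [Finset.sum_sub_distrib]
        simp
      rw [hsub]
      nlinarith
    -- combine over all variables
    set B : ℕ := Fintype.card X with hB
    set ε : ℝ := 1 / (2 * n * (B + 1)) with hε
    have hεpos : 0 < ε := by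
      rw [hε]
      positivity
    have hzero' : ∀ x : X, ∀ᶠ N : ℕ in atTop, 1 ≤ G.payoff (some x) ρ →
        ∑ k ∈ Finset.range N, (1 - (satW (some x) (ρ k) (ρ (k + 1)) : ℝ)) < ε * N := by
      intro x
      by_cases hx : 1 ≤ G.payoff (some x) ρ
      · filter_upwards [hzero x hx ε hεpos] with N hN _ using hN
      · filter_upwards with N hx' using absurd hx' hx
    have hall := Filter.eventually_all.2 hzero'
    obtain ⟨N₀, hN₀⟩ := Filter.eventually_atTop.1 hall
    set N : ℕ := max N₀ (4 * n * (B + 1)) with hN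
    have hNb := hN₀ N (le_max_left _ _)
    -- counting
    set F : Finset X := Finset.univ.filter (fun x => 1 ≤ G.payoff (some x) ρ) with hF
    set T : Finset ℕ := (Finset.range N).filter
      (fun k => k % 2 = 0 ∧ (k / 2) % n = i.1) with hT
    have hTcard : ∀ k ∈ T, ∃ x ∈ F, ρ (k + 1) = SatV.lit i x true := by
      intro k hk
      rw [hT, Finset.mem_filter] at hk
      obtain ⟨hkr, hke, hkm⟩ := hk
      obtain ⟨x, hx1, hx2⟩ := hbig (k / 2) hkm
      refine ⟨x, ?_, ?_⟩
      · rw [hF, Finset.mem_filter]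
        exact ⟨Finset.mem_univ x, hx2⟩
      · rw [show k + 1 = 2 * (k / 2) + 1 from by omega]
        exact hx1
    have hTle : (T.card : ℝ) ≤ ∑ x ∈ F, ∑ k ∈ Finset.range N,
        (1 - (satW (some x) (ρ k) (ρ (k + 1)) : ℝ)) := by
      rw [Finset.sum_comm]
      have hstep : ∀ k ∈ T, (1 : ℝ) ≤ ∑ x ∈ F, (1 - (satW (some x) (ρ k) (ρ (k + 1)) : ℝ)) := by
        intro k hk
        obtain ⟨x, hxF, hxlit⟩ := hTcard k hk
        have hterm : (1 : ℝ) - (satW (some x) (ρ k) (ρ (k + 1)) : ℝ) = 1 := by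
          rw [hxlit, satW_some_zero]
          norm_num
        calc (1 : ℝ) = 1 - (satW (some x) (ρ k) (ρ (k + 1)) : ℝ) := hterm.symm
          _ ≤ ∑ x ∈ F, (1 - (satW (some x) (ρ k) (ρ (k + 1)) : ℝ)) :=
            Finset.single_le_sum (fun y _ =>
              sub_nonneg.2 (satW_le_one (some y) (ρ k) (ρ (k + 1)))) hxF
      have hTsub : T ⊆ Finset.range N := by
        rw [hT]
        exact Finset.filter_subset _ _
      calc (T.card : ℝ) = ∑ _k ∈ T, (1 : ℝ) := by simp
        _ ≤ ∑ k ∈ T, ∑ x ∈ F, (1 - (satW (some x) (ρ k) (ρ (k + 1)) : ℝ)) :=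
          Finset.sum_le_sum hstep
        _ ≤ ∑ k ∈ Finset.range N, ∑ x ∈ F, (1 - (satW (some x) (ρ k) (ρ (k + 1)) : ℝ)) := by
          apply Finset.sum_le_sum_of_subset_of_nonneg hTsub
          intro k _ _
          apply Finset.sum_nonneg
          intro y _
          have := satW_le_one (some y) (ρ k) (ρ (k + 1))
          linarith
    have hFbound : ∑ x ∈ F, ∑ k ∈ Finset.range N,
        (1 - (satW (some x) (ρ k) (ρ (k + 1)) : ℝ)) ≤ (B : ℝ) * (ε * N) := by
      calc ∑ x ∈ F, ∑ k ∈ Finset.range N, (1 - (satW (some x) (ρ k) (ρ (k + 1)) : ℝ))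
          ≤ ∑ _x ∈ F, (ε * N) := by
            apply Finset.sum_le_sum
            intro x hx
            rw [hF, Finset.mem_filter] at hx
            exact le_of_lt (hNb x hx.2)
        _ = (F.card : ℝ) * (ε * N) := by rw [Finset.sum_const]; ring
        _ ≤ (B : ℝ) * (ε * N) := by
            apply mul_le_mul_of_nonneg_right
            · exact_mod_cast (Finset.card_filter_le _ _).trans (le_of_eq (by simp [hB]))
            · positivity
    -- lower bound on T.card
    have hTlb : N / (2 * n) ≤ T.card := by
      have hinj : ∀ j ∈ Finset.range (N / (2 * n)), 2 * (i.1 + j * n) ∈ T := by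
        intro j hj
        rw [Finset.mem_range] at hj
        rw [hT, Finset.mem_filter, Finset.mem_range]
        have hin : 2 * (i.1 + j * n) < N := by
          have h1 : i.1 < n := i.isLt
          have h2 : (j + 1) * (2 * n) ≤ (N / (2 * n)) * (2 * n) :=
            Nat.mul_le_mul_right _ (by omega)
          have h3 : (N / (2 * n)) * (2 * n) ≤ N := Nat.div_mul_le_self N (2 * n)
          nlinarith
        refine ⟨hin, by omega, ?_⟩
        rw [show 2 * (i.1 + j * n) / 2 = i.1 + j * n from by omega]
        rw [Nat.add_mul_mod_self_right]
        exact Nat.mod_eq_of_lt i.isLt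
      calc N / (2 * n) = (Finset.range (N / (2 * n))).card := (Finset.card_range _).symm
        _ ≤ T.card := Finset.card_le_card_of_injOn (fun j => 2 * (i.1 + j * n))
            hinj (fun a _ b _ hab => by
              have hab' : 2 * (i.1 + a * n) = 2 * (i.1 + b * n) := hab
              exact Nat.eq_of_mul_eq_mul_right hn (show a * n = b * n by omega))
    -- final contradiction
    have h2n : 0 < 2 * n := by omega
    obtain ⟨hq, hr⟩ : N = 2 * n * (N / (2 * n)) + N % (2 * n) ∧ N % (2 * n) < 2 * n :=
      ⟨(Nat.div_add_mod N (2 * n)).symm, Nat.mod_lt _ h2n⟩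
    have hNge : 4 * n * (B + 1) ≤ N := le_max_right _ _
    have hchain : ((N / (2 * n) : ℕ) : ℝ) ≤ (B : ℝ) * (ε * N) := by
      calc ((N / (2 * n) : ℕ) : ℝ) ≤ (T.card : ℝ) := by exact_mod_cast hTlb
        _ ≤ _ := hTle
        _ ≤ _ := hFbound
    set Q : ℝ := ((N / (2 * n) : ℕ) : ℝ) with hQdef
    have hNr : ((N % (2 * n) : ℕ) : ℝ) < 2 * (n : ℝ) := by exact_mod_cast hr
    have hNe : (N : ℝ) = 2 * (n : ℝ) * Q + ((N % (2 * n) : ℕ) : ℝ) := by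
      rw [hQdef]
      exact_mod_cast hq
    have hNge' : 4 * (n : ℝ) * ((B : ℝ) + 1) ≤ (N : ℝ) := by exact_mod_cast hNge
    have hn' : (1 : ℝ) ≤ n := by exact_mod_cast hn
    have hB0 : (0 : ℝ) ≤ B := Nat.cast_nonneg B
    have hd : (0 : ℝ) < 2 * (n : ℝ) * ((B : ℝ) + 1) := by positivity
    have hcancel : ε * (2 * (n : ℝ) * ((B : ℝ) + 1)) = 1 := by
      rw [hε]
      field_simp
    have hchain2 : Q * (2 * (n : ℝ) * ((B : ℝ) + 1)) ≤ (B : ℝ) * (N : ℝ) := by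
      have hmm := mul_le_mul_of_nonneg_right hchain hd.le
      have h1 : (B : ℝ) * (ε * (N : ℝ)) * (2 * (n : ℝ) * ((B : ℝ) + 1)) =
          (B : ℝ) * (N : ℝ) * (ε * (2 * (n : ℝ) * ((B : ℝ) + 1))) := by ring
      rw [h1, hcancel, mul_one] at hmm
      exact hmm
    have hQ2 : (N : ℝ) - 2 * (n : ℝ) < 2 * (n : ℝ) * Q := by linarith
    have hmul : ((N : ℝ) - 2 * (n : ℝ)) * ((B : ℝ) + 1) <
        (2 * (n : ℝ) * Q) * ((B : ℝ) + 1) :=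
      mul_lt_mul_of_pos_right hQ2 (by positivity)
    have hch3 : (2 * (n : ℝ) * Q) * ((B : ℝ) + 1) ≤ (B : ℝ) * (N : ℝ) := by
      calc (2 * (n : ℝ) * Q) * ((B : ℝ) + 1) = Q * (2 * (n : ℝ) * ((B : ℝ) + 1)) := by ring
        _ ≤ _ := hchain2
    nlinarith [hmul, hch3, hNge', hn', hB0, mul_nonneg (Nat.cast_nonneg n) hB0]
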